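/- Let p₁,…,p_n ∈ [0,1] and x₁,…,x_n ∈ [0,1], let P = p₁+⋯+p_n > 0 and X = p₁x₁+⋯+p_nx_n. Choose K indices i(1),…,i(K) independently and uniformly at random from {1,…,n}. Then for every α ∈ (0,1], Pr[ |(p_{i(1)}x_{i(1)}+⋯+p_{i(K)}x_{i(K)})/(p_{i(1)}+⋯+p_{i(K)}) − X/P| > α ] ≤ 4·exp(−α²·(P/n)²·K/2), where the ratio is interpreted as 0 when its denominator is 0. -/

import Mathlib

open Real

open scoped BigOperators

/-- Hoeffding's lemma, analytic core: for `a ≤ 0 ≤ b`,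
`b e^{ta} - a e^{tb} ≤ (b-a) e^{t²(b-a)²/8}`. -/
lemma hoeff_key (a b : ℝ) (ha : a ≤ 0) (hb : 0 ≤ b) (t : ℝ) :
    b * exp (a * t) - a * exp (b * t) ≤ (b - a) * exp (t ^ 2 * (b - a) ^ 2 / 8) := by
  rcases eq_or_lt_of_le (sub_nonneg.2 (ha.trans hb)) with hab | hab
  · have ha0 : a = 0 := le_antisymm ha (by nlinarith [hab.le, hab.ge])
    have hb0 : b = 0 := by nlinarith [hab.le, hab.ge]
    simp [ha0, hb0]
  · set C : ℝ := (b - a) ^ 2 / 4 with hC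
    set f : ℝ → ℝ := fun s => b * exp (a * s) - a * exp (b * s) with hf_def
    have hfpos : ∀ s, 0 < f s := by
      intro s
      have h1 := exp_pos (a * s)
      have h2 := exp_pos (b * s)
      rcases lt_or_eq_of_le hb with hb' | hb'
      · simp only [hf_def]
        nlinarith [mul_pos hb' h1, mul_nonneg (neg_nonneg.2 ha) h2.le]
      · have ha' : a < 0 := by simp only [← hb'] at hab ⊢; linarith
        simp only [hf_def]
        nlinarith [mul_pos (neg_pos.2 ha') h2, mul_nonneg hb h1.le]
    set N : ℝ → ℝ := fun s => a * b * exp (a * s) - a * b * exp (b * s) with hN_def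
    have hE1 : ∀ s : ℝ, HasDerivAt (fun s : ℝ => exp (a * s)) (a * exp (a * s)) s := by
      intro s
      have := ((hasDerivAt_id s).const_mul a).exp
      simpa [mul_comm] using this
    have hE2 : ∀ s : ℝ, HasDerivAt (fun s : ℝ => exp (b * s)) (b * exp (b * s)) s := by
      intro s
      have := ((hasDerivAt_id s).const_mul b).exp
      simpa [mul_comm] using this
    have hf : ∀ s, HasDerivAt f (N s) s := by
      intro s
      have := ((hE1 s).const_mul b).sub ((hE2 s).const_mul a)
      exact this.congr_deriv (by simp only [hN_def]; ring)
    set D : ℝ → ℝ := fun s => N s / f s with hD_def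
    set D' : ℝ → ℝ := fun s =>
      ((a * b * (a * exp (a * s)) - a * b * (b * exp (b * s))) * f s - N s * N s) / (f s) ^ 2
      with hD'_def
    have hN' : ∀ s, HasDerivAt N (a * b * (a * exp (a * s)) - a * b * (b * exp (b * s))) s := by
      intro s
      exact ((hE1 s).const_mul (a * b)).sub ((hE2 s).const_mul (a * b)) |>.congr_deriv (by ring)
    have hD : ∀ s, HasDerivAt D (D' s) s := by
      intro s
      exact (hN' s).div (hf s) (hfpos s).ne'
    have hD'le : ∀ s, D' s ≤ C := by
      intro s
      have h1 := exp_pos (a * s)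
      have h2 := exp_pos (b * s)
      have hfp := hfpos s
      rw [hD'_def]
      rw [div_le_iff₀ (by positivity)]
      have hnum : (a * b * (a * exp (a * s)) - a * b * (b * exp (b * s))) * f s - N s * N s
          = (-(a * b)) * exp (a * s) * exp (b * s) * (b - a) ^ 2 := by
        simp only [hf_def, hN_def]; ring
      rw [hnum, hC]
      have key : 4 * ((-(a * b)) * exp (a * s) * exp (b * s)) ≤ (f s) ^ 2 := by
        simp only [hf_def]
        nlinarith [sq_nonneg (b * exp (a * s) + a * exp (b * s))]
      nlinarith [mul_le_mul_of_nonneg_left key (show (0:ℝ) ≤ (b - a) ^ 2 / 4 by positivity)]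
    have hD0 : D 0 = 0 := by simp [hD_def, hN_def]
    -- u = C * s - D s is monotone
    have hu : ∀ s, HasDerivAt (fun s => C * s - D s) (C - D' s) s := by
      intro s
      exact ((hasDerivAt_id s).const_mul C).congr_deriv (mul_one C) |>.sub (hD s)
    have humono : Monotone (fun s => C * s - D s) :=
      monotone_of_hasDerivAt_nonneg hu (fun s => sub_nonneg.2 (hD'le s))
    have hDle : ∀ s, 0 ≤ s → D s ≤ C * s := by
      intro s hs
      have := humono hs
      simp only [hD0] at this
      linarith
    have hDge : ∀ s, s ≤ 0 → C * s ≤ D s := by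
      intro s hs
      have := humono hs
      simp only [hD0] at this
      linarith
    -- g = log ∘ f, h s = g s - s^2 * C / 2
    set g : ℝ → ℝ := fun s => Real.log (f s) with hg_def
    have hg : ∀ s, HasDerivAt g (D s) s := fun s => (hf s).log (hfpos s).ne'
    set h : ℝ → ℝ := fun s => g s - s ^ 2 * C / 2 with hh_def
    have hh : ∀ s, HasDerivAt h (D s - s * C) s := by
      intro s
      have h2 : HasDerivAt (fun s : ℝ => s ^ 2 * C / 2) (s * C) s := by
        have := ((hasDerivAt_pow 2 s).mul_const C).div_const 2
        exact this.congr_deriv (by rw [show (2:ℕ) - 1 = 1 from rfl, pow_one]; push_cast; ring)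
      exact (hg s).sub h2
    have hcont : Continuous h := by
      have : Differentiable ℝ h := fun s => (hh s).differentiableAt
      exact this.continuous
    have hht : h t ≤ h 0 := by
      rcases le_total 0 t with ht | ht
      · have hanti : AntitoneOn h (Set.Ici 0) := by
          apply antitoneOn_of_hasDerivWithinAt_nonpos (convex_Ici 0) hcont.continuousOn
            (fun s hs => (hh s).hasDerivWithinAt)
          intro s hs
          rw [interior_Ici] at hs
          have := hDle s (le_of_lt hs)
          nlinarith [this]
        exact hanti (Set.self_mem_Ici) ht ht
      · have hmono : MonotoneOn h (Set.Iic 0) := by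
          apply monotoneOn_of_hasDerivWithinAt_nonneg (convex_Iic 0) hcont.continuousOn
            (fun s hs => (hh s).hasDerivWithinAt)
          intro s hs
          rw [interior_Iic] at hs
          have := hDge s (le_of_lt hs)
          nlinarith [this]
        exact hmono ht (Set.self_mem_Iic) ht
    -- unfold
    have hg0 : g 0 = Real.log (b - a) := by simp [hg_def, hf_def]
    have hft : f t ≤ (b - a) * exp (t ^ 2 * (b - a) ^ 2 / 8) := by
      have h1 : g t ≤ Real.log (b - a) + t ^ 2 * C / 2 := by
        have := hht
        simp only [hh_def, hg0] at this ⊢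
        nlinarith [this]
      calc f t = exp (g t) := (exp_log (hfpos t)).symm
        _ ≤ exp (Real.log (b - a) + t ^ 2 * C / 2) := exp_le_exp.2 h1
        _ = (b - a) * exp (t ^ 2 * (b - a) ^ 2 / 8) := by
            rw [exp_add, exp_log hab]
            congr 1
            rw [hC]; ring
    simpa [hf_def] using hft

/-- Hoeffding MGF bound, discrete uniform average form. -/
lemma mgf_avg (n : ℕ) (hn : 0 < n) (W : Fin n → ℝ) (A B : ℝ)
    (hW : ∀ i, W i ∈ Set.Icc A B) (l : ℝ) :
    ∑ i, exp (l * W i) ≤ n * exp (l * ((∑ i, W i) / n) + l ^ 2 * (B - A) ^ 2 / 8) := by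
  have hnpos : (0 : ℝ) < n := Nat.cast_pos.2 hn
  set μ : ℝ := (∑ i, W i) / n with hμ
  have hsum : ∑ i, W i = n * μ := by rw [hμ]; field_simp
  have hAμ : A ≤ μ := by
    rw [hμ, le_div_iff₀ hnpos]
    calc A * n = ∑ _i : Fin n, A := by
          simp [Finset.sum_const, Finset.card_univ, mul_comm]
      _ ≤ ∑ i, W i := Finset.sum_le_sum fun i _ => (hW i).1
  have hμB : μ ≤ B := by
    rw [hμ, div_le_iff₀ hnpos]
    calc ∑ i, W i ≤ ∑ _i : Fin n, B := Finset.sum_le_sum fun i _ => (hW i).2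
      _ = B * n := by simp [Finset.sum_const, Finset.card_univ, mul_comm]
  rcases eq_or_lt_of_le (hAμ.trans hμB) with hAB | hAB
  · -- A = B : all W i = A
    have hWi : ∀ i, W i = A := fun i => le_antisymm (hAB ▸ (hW i).2) (hW i).1
    have hμA : μ = A := by
      rw [hμ]
      simp [hWi, Finset.sum_const, Finset.card_univ]
      field_simp
    calc ∑ i, exp (l * W i) = n * exp (l * μ) := by
          simp [hWi, hμA, Finset.sum_const, Finset.card_univ, mul_comm]
      _ ≤ n * exp (l * μ + l ^ 2 * (B - A) ^ 2 / 8) := by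
          apply mul_le_mul_of_nonneg_left (exp_le_exp.2 (by nlinarith [sq_nonneg l, sq_nonneg (B-A)])) hnpos.le
  · -- A < B
    have hBA : (0:ℝ) < B - A := sub_pos.2 hAB
    -- convexity step
    have hconv : ∀ i, exp (l * W i)
        ≤ ((B - W i) * exp (l * A) + (W i - A) * exp (l * B)) / (B - A) := by
      intro i
      have h1 : (0:ℝ) ≤ (B - W i) / (B - A) := by
        apply div_nonneg (by linarith [(hW i).2]) hBA.le
      have h2 : (0:ℝ) ≤ (W i - A) / (B - A) := by
        apply div_nonneg (by linarith [(hW i).1]) hBA.le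
      have h3 : (B - W i) / (B - A) + (W i - A) / (B - A) = 1 := by
        field_simp
        ring
      have := convexOn_exp.2 (Set.mem_univ (l * A)) (Set.mem_univ (l * B)) h1 h2 h3
      simp only [smul_eq_mul] at this
      have harg : (B - W i) / (B - A) * (l * A) + (W i - A) / (B - A) * (l * B) = l * W i := by
        field_simp
        ring
      rw [harg] at this
      calc exp (l * W i) ≤ (B - W i) / (B - A) * exp (l * A) + (W i - A) / (B - A) * exp (l * B) := this
        _ = ((B - W i) * exp (l * A) + (W i - A) * exp (l * B)) / (B - A) := by ring
    have hsum2 : ∑ i, exp (l * W i)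
        ≤ (n * ((B - μ) * exp (l * A) + (μ - A) * exp (l * B))) / (B - A) := by
      calc ∑ i, exp (l * W i)
          ≤ ∑ i, ((B - W i) * exp (l * A) + (W i - A) * exp (l * B)) / (B - A) :=
            Finset.sum_le_sum fun i _ => hconv i
        _ = ((n * B - n * μ) * exp (l * A) + (n * μ - n * A) * exp (l * B)) / (B - A) := by
            rw [← Finset.sum_div]
            congr 1
            have h : ∀ i : Fin n, (B - W i) * exp (l * A) + (W i - A) * exp (l * B)
                = (B * exp (l * A) - A * exp (l * B)) + W i * (exp (l * B) - exp (l * A)) :=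
              fun i => by ring
            simp only [h]
            rw [Finset.sum_add_distrib, Finset.sum_const, Finset.card_univ, ← Finset.sum_mul, hsum]
            simp only [Fintype.card_fin, nsmul_eq_mul]
            ring
        _ = (n * ((B - μ) * exp (l * A) + (μ - A) * exp (l * B))) / (B - A) := by ring
    -- Hoeffding key applied to centered interval
    have key := hoeff_key (A - μ) (B - μ) (by linarith) (by linarith) l
    have e1 : exp (l * A) = exp ((A - μ) * l) * exp (l * μ) := by
      rw [← exp_add]; congr 1; ring
    have e2 : exp (l * B) = exp ((B - μ) * l) * exp (l * μ) := by
      rw [← exp_add]; congr 1; ring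
    have hT2 : (B - μ) * exp (l * A) + (μ - A) * exp (l * B)
        ≤ (B - A) * exp (l * μ + l ^ 2 * (B - A) ^ 2 / 8) := by
      have := mul_le_mul_of_nonneg_right key (exp_pos (l * μ)).le
      calc (B - μ) * exp (l * A) + (μ - A) * exp (l * B)
          = ((B - μ) * exp ((A - μ) * l) - (A - μ) * exp ((B - μ) * l)) * exp (l * μ) := by
            rw [e1, e2]; ring
        _ ≤ (B - μ - (A - μ)) * exp (l ^ 2 * (B - μ - (A - μ)) ^ 2 / 8) * exp (l * μ) := this
        _ = (B - A) * exp (l * μ + l ^ 2 * (B - A) ^ 2 / 8) := by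
            rw [mul_assoc, ← exp_add]
            have : B - μ - (A - μ) = B - A := by ring
            rw [this]
            congr 1
            ring
    calc ∑ i, exp (l * W i)
        ≤ (n * ((B - μ) * exp (l * A) + (μ - A) * exp (l * B))) / (B - A) := hsum2
      _ ≤ (n * ((B - A) * exp (l * μ + l ^ 2 * (B - A) ^ 2 / 8))) / (B - A) := by
          gcongr
      _ = n * exp (l * μ + l ^ 2 * (B - A) ^ 2 / 8) := by
          field_simp

/-- Discrete one-sided Chernoff bound. -/
lemma chernoff (n K : ℕ) (hn : 0 < n) (W : Fin n → ℝ) (A B : ℝ)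
    (hW : ∀ i, W i ∈ Set.Icc A B) (hBA2 : B - A ≤ 2) (δ : ℝ) (hδ : 0 < δ)
    (hmean : (∑ i, W i) / n ≤ -δ) :
    (∑ idx : Fin K → Fin n, if 0 ≤ ∑ j, W (idx j) then (1:ℝ) else 0) / (n:ℝ) ^ K
      ≤ Real.exp (-(δ ^ 2 * K / 2)) := by
  have hnpos : (0 : ℝ) < n := Nat.cast_pos.2 hn
  have hAB : A ≤ B := (hW ⟨0, hn⟩).1.trans (hW ⟨0, hn⟩).2
  rw [div_le_iff₀ (pow_pos hnpos K)]
  have step1 : (∑ idx : Fin K → Fin n, if 0 ≤ ∑ j, W (idx j) then (1:ℝ) else 0)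
      ≤ ∑ idx : Fin K → Fin n, ∏ j, exp (δ * W (idx j)) := by
    apply Finset.sum_le_sum
    intro idx _
    have : ∏ j, exp (δ * W (idx j)) = exp (δ * ∑ j, W (idx j)) := by
      rw [← Real.exp_sum, Finset.mul_sum]
    rw [this]
    split_ifs with h
    · exact one_le_exp (by positivity)
    · exact (exp_pos _).le
  have step2 : ∑ idx : Fin K → Fin n, ∏ j, exp (δ * W (idx j))
      = (∑ i, exp (δ * W i)) ^ K := (Fintype.sum_pow (fun i => exp (δ * W i)) K).symm
  have step3 : ∑ i, exp (δ * W i) ≤ n * exp (-(δ ^ 2 / 2)) := by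
    calc ∑ i, exp (δ * W i)
        ≤ n * exp (δ * ((∑ i, W i) / n) + δ ^ 2 * (B - A) ^ 2 / 8) := mgf_avg n hn W A B hW δ
      _ ≤ n * exp (-(δ ^ 2 / 2)) := by
          apply mul_le_mul_of_nonneg_left (exp_le_exp.2 ?_) hnpos.le
          have h1 : δ * ((∑ i, W i) / n) ≤ -(δ ^ 2) := by
            have := mul_le_mul_of_nonneg_left hmean hδ.le
            nlinarith
          have h2 : δ ^ 2 * (B - A) ^ 2 / 8 ≤ δ ^ 2 / 2 := by
            have hBA0 : (0:ℝ) ≤ B - A := sub_nonneg.2 hAB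
            have hBA4 : (B - A) ^ 2 ≤ 4 := by nlinarith
            nlinarith [mul_le_mul_of_nonneg_left hBA4 (sq_nonneg δ)]
          linarith
  calc (∑ idx : Fin K → Fin n, if 0 ≤ ∑ j, W (idx j) then (1:ℝ) else 0)
      ≤ (∑ i, exp (δ * W i)) ^ K := by rw [← step2]; exact step1
    _ ≤ (n * exp (-(δ ^ 2 / 2))) ^ K := by
        apply pow_le_pow_left₀ (Finset.sum_nonneg fun i _ => (exp_pos _).le) step3
    _ = exp (-(δ ^ 2 * K / 2)) * n ^ K := by
        rw [mul_pow, ← Real.exp_nat_mul]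
        ring_nf

set_option maxHeartbeats 2000000 in
/-- a Chernoff–Hoeffding corollary: estimating a `p`-weighted average
`X/P` of numbers `x_i ∈ [0,1]` by the weighted average over `K` uniformly random
sampled indices, the probability of an error larger than `α` is at most
`4 exp(-α² (P/n)² K / 2)`.  (A ratio with zero denominator is interpreted as `0`.) -/
theorem stmt_12 (n K : ℕ) (hn : 0 < n)
    (p x : Fin n → ℝ)
    (hp : ∀ i, p i ∈ Set.Icc (0 : ℝ) 1) (hx : ∀ i, x i ∈ Set.Icc (0 : ℝ) 1)
    (hP : 0 < ∑ i, p i)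
    (α : ℝ) (hα : α ∈ Set.Ioc (0 : ℝ) 1) :
    (∑ idx : Fin K → Fin n,
        if α < |(∑ j, p (idx j) * x (idx j)) / (∑ j, p (idx j)) -
                (∑ i, p i * x i) / (∑ i, p i)|
        then (1 : ℝ) else 0) / (n : ℝ) ^ K
      ≤ 4 * Real.exp (-(α ^ 2 * ((∑ i, p i) / n) ^ 2 * K / 2)) := by
  obtain ⟨hα0, hα1⟩ := hα
  have hnpos : (0 : ℝ) < n := Nat.cast_pos.2 hn
  set P : ℝ := ∑ i, p i with hPdef
  set X : ℝ := ∑ i, p i * x i with hXdef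
  have hX0 : 0 ≤ X := Finset.sum_nonneg fun i _ => mul_nonneg (hp i).1 (hx i).1
  have hXP : X ≤ P := Finset.sum_le_sum fun i _ => by
    nlinarith [(hp i).1, (hx i).2]
  have hr0 : 0 ≤ X / P := div_nonneg hX0 hP.le
  have hr1 : X / P ≤ 1 := (div_le_one hP).2 hXP
  set cp : ℝ := X / P + α with hcp
  set cm : ℝ := X / P - α with hcm
  have hcp0 : 0 < cp := by positivity
  have hcp2 : cp ≤ 2 := by simp only [hcp]; linarith
  have hcm1 : cm ≤ 1 := by simp only [hcm]; linarith
  have hcmm1 : -1 ≤ cm := by simp only [hcm]; linarith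
  set Wp : Fin n → ℝ := fun i => p i * x i - cp * p i with hWp
  set Wm : Fin n → ℝ := fun i => cm * p i - p i * x i with hWm
  set δ : ℝ := α * P / n with hδdef
  have hδ : 0 < δ := by positivity
  clear_value P X cp cm Wp Wm δ
  -- bounds for Wp
  have hWpmem : ∀ i, Wp i ∈ Set.Icc (-cp) (max (1 - cp) 0) := by
    intro i
    obtain ⟨hp0, hp1⟩ := hp i
    obtain ⟨hx0, hx1⟩ := hx i
    constructor
    · simp only [hWp]; nlinarith
    · rcases le_total (x i) cp with h | h
      · refine le_trans ?_ (le_max_right _ _)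
        simp only [hWp]; nlinarith
      · refine le_trans ?_ (le_max_left _ _)
        simp only [hWp]; nlinarith
  have hWpw : max (1 - cp) 0 - (-cp) ≤ 2 := by
    have : max (1 - cp) 0 ≤ 2 - cp := max_le (by linarith) (by linarith)
    linarith
  have hWpmean : (∑ i, Wp i) / n ≤ -δ := by
    have hs : ∑ i, Wp i = X - cp * P := by
      simp only [hWp, Finset.sum_sub_distrib, ← Finset.mul_sum, hXdef, hPdef]
    have hXc : X - cp * P = -(α * P) := by
      simp only [hcp]
      field_simp
      ring
    rw [hs, hXc, hδdef, neg_div]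
  -- bounds for Wm
  have hWmmem : ∀ i, Wm i ∈ Set.Icc (min (cm - 1) 0) (max cm 0) := by
    intro i
    obtain ⟨hp0, hp1⟩ := hp i
    obtain ⟨hx0, hx1⟩ := hx i
    constructor
    · rcases le_total cm (x i) with h | h
      · refine le_trans (min_le_left _ _) ?_
        simp only [hWm]
        nlinarith [mul_nonneg (by linarith : (0:ℝ) ≤ 1 - p i) (by linarith : (0:ℝ) ≤ x i - cm)]
      · refine le_trans (min_le_right _ _) ?_
        simp only [hWm]
        nlinarith [mul_nonneg hp0 (by linarith : (0:ℝ) ≤ cm - x i)]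
    · rcases le_total cm (x i) with h | h
      · refine le_trans ?_ (le_max_right _ _)
        simp only [hWm]
        nlinarith [mul_nonneg hp0 (by linarith : (0:ℝ) ≤ x i - cm)]
      · refine le_trans ?_ (le_max_left _ _)
        simp only [hWm]
        nlinarith [mul_nonneg (by linarith : (0:ℝ) ≤ 1 - p i) (by linarith : (0:ℝ) ≤ cm - x i)]
  have hWmw : max cm 0 - min (cm - 1) 0 ≤ 2 := by
    rcases le_total cm 0 with h | h
    · rw [max_eq_right h, min_eq_left (by linarith : cm - 1 ≤ 0)]
      linarith
    · rw [max_eq_left h, min_eq_left (by linarith : cm - 1 ≤ 0)]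
      linarith
  have hWmmean : (∑ i, Wm i) / n ≤ -δ := by
    have hs : ∑ i, Wm i = cm * P - X := by
      simp only [hWm, Finset.sum_sub_distrib, ← Finset.mul_sum, hXdef, hPdef]
    have hXc : cm * P - X = -(α * P) := by
      simp only [hcm]
      field_simp
      ring
    rw [hs, hXc, hδdef, neg_div]
  -- event inclusion
  have hincl : ∀ idx : Fin K → Fin n,
      (if α < |(∑ j, p (idx j) * x (idx j)) / (∑ j, p (idx j)) - X / P| then (1:ℝ) else 0)
      ≤ (if 0 ≤ ∑ j, Wp (idx j) then (1:ℝ) else 0)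
        + (if 0 ≤ ∑ j, Wm (idx j) then (1:ℝ) else 0) := by
    intro idx
    set SY : ℝ := ∑ j, p (idx j) * x (idx j) with hSY
    set SZ : ℝ := ∑ j, p (idx j) with hSZ
    have hSZ0 : 0 ≤ SZ := Finset.sum_nonneg fun j _ => (hp (idx j)).1
    have hSY0 : 0 ≤ SY := Finset.sum_nonneg fun j _ => mul_nonneg (hp (idx j)).1 (hx (idx j)).1
    have hSYZ : SY ≤ SZ := Finset.sum_le_sum fun j _ => by
      nlinarith [(hp (idx j)).1, (hx (idx j)).2]
    have hsump : ∑ j, Wp (idx j) = SY - cp * SZ := by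
      simp only [hWp, Finset.sum_sub_distrib, ← Finset.mul_sum, hSY, hSZ]
    have hsumm : ∑ j, Wm (idx j) = cm * SZ - SY := by
      simp only [hWm, Finset.sum_sub_distrib, ← Finset.mul_sum, hSY, hSZ]
    have hkey : α < |SY / SZ - X / P| →
        (0 ≤ ∑ j, Wp (idx j)) ∨ (0 ≤ ∑ j, Wm (idx j)) := by
      intro hE
      rcases eq_or_lt_of_le hSZ0 with hz | hz
      · right
        have hSYz : SY = 0 := le_antisymm (hz ▸ hSYZ) hSY0
        rw [hsumm, ← hz, hSYz]
        norm_num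
      · rcases lt_abs.1 hE with hgt | hlt
        · left
          rw [hsump]
          have hlt' : cp * SZ < SY := (lt_div_iff₀ hz).1 (by rw [hcp]; linarith)
          linarith
        · right
          rw [hsumm]
          have hlt' : SY < cm * SZ := (div_lt_iff₀ hz).1 (by rw [hcm]; linarith)
          linarith
    by_cases hE : α < |SY / SZ - X / P|
    · rw [if_pos hE]
      rcases hkey hE with h | h
      · rw [if_pos h]
        have : (0:ℝ) ≤ if 0 ≤ ∑ j, Wm (idx j) then (1:ℝ) else 0 := by split_ifs <;> norm_num
        linarith
      · rw [if_pos h]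
        have : (0:ℝ) ≤ if 0 ≤ ∑ j, Wp (idx j) then (1:ℝ) else 0 := by split_ifs <;> norm_num
        linarith
    · rw [if_neg hE]
      have h1 : (0:ℝ) ≤ if 0 ≤ ∑ j, Wp (idx j) then (1:ℝ) else 0 := by split_ifs <;> norm_num
      have h2 : (0:ℝ) ≤ if 0 ≤ ∑ j, Wm (idx j) then (1:ℝ) else 0 := by split_ifs <;> norm_num
      linarith
  -- combine
  have hsum_le : (∑ idx : Fin K → Fin n,
        if α < |(∑ j, p (idx j) * x (idx j)) / (∑ j, p (idx j)) - X / P| then (1:ℝ) else 0)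
      ≤ (∑ idx : Fin K → Fin n, if 0 ≤ ∑ j, Wp (idx j) then (1:ℝ) else 0)
        + (∑ idx : Fin K → Fin n, if 0 ≤ ∑ j, Wm (idx j) then (1:ℝ) else 0) := by
    rw [← Finset.sum_add_distrib]
    exact Finset.sum_le_sum fun idx _ => hincl idx
  have hCp := chernoff n K hn Wp (-cp) (max (1 - cp) 0) hWpmem (by linarith [hWpw]) δ hδ hWpmean
  have hCm := chernoff n K hn Wm (min (cm - 1) 0) (max cm 0) hWmmem (by linarith [hWmw]) δ hδ hWmmean
  have hexp_eq : -(δ ^ 2 * K / 2) = -(α ^ 2 * (P / n) ^ 2 * K / 2) := by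
    rw [hδdef]
    ring
  calc (∑ idx : Fin K → Fin n,
        if α < |(∑ j, p (idx j) * x (idx j)) / (∑ j, p (idx j)) - X / P| then (1:ℝ) else 0) / (n:ℝ) ^ K
      ≤ ((∑ idx : Fin K → Fin n, if 0 ≤ ∑ j, Wp (idx j) then (1:ℝ) else 0)
          + (∑ idx : Fin K → Fin n, if 0 ≤ ∑ j, Wm (idx j) then (1:ℝ) else 0)) / (n:ℝ) ^ K := by
        apply div_le_div_of_nonneg_right hsum_le (pow_pos hnpos K).le
    _ = (∑ idx : Fin K → Fin n, if 0 ≤ ∑ j, Wp (idx j) then (1:ℝ) else 0) / (n:ℝ) ^ K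
          + (∑ idx : Fin K → Fin n, if 0 ≤ ∑ j, Wm (idx j) then (1:ℝ) else 0) / (n:ℝ) ^ K := by
        ring
    _ ≤ Real.exp (-(δ ^ 2 * K / 2)) + Real.exp (-(δ ^ 2 * K / 2)) := add_le_add hCp hCm
    _ ≤ 4 * Real.exp (-(α ^ 2 * (P / n) ^ 2 * K / 2)) := by
        rw [hexp_eq]
        have := exp_pos (-(α ^ 2 * (P / n) ^ 2 * K / 2))
        linarith
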